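/- Let k ≥ 2. Suppose there exist c > 0 and 0 < γ ≤ 1 such that for all m ≥ k, every simple m×⌊c·m^{k−1}⌋ (0,1)-matrix makes m^{1−γ} contributions. Then there exists c' > 0 such that for all m ≥ k, every simple m×⌊c'·m^{k−1}⌋ (0,1)-matrix makes m^{1−γ'} contributions, where γ' = γ/(k−1+γ). -/

import Mathlib

/-- A (0,1)-matrix (entries in `Bool`) is *simple* if its columns are pairwise distinct. -/
def SimpleMatrix {m n : ℕ} (M : Matrix (Fin m) (Fin n) Bool) : Prop :=
  ∀ c c' : Fin n, (∀ r : Fin m, M r c = M r c') → c = c'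

/-- `M` contains `F` as an induced submatrix: `F` can be obtained from `M` by deleting
rows and columns (order preserved). -/
def ContainsInduced {m n k l : ℕ} (M : Matrix (Fin m) (Fin n) Bool)
    (F : Matrix (Fin k) (Fin l) Bool) : Prop :=
  ∃ r : Fin k → Fin m, ∃ c : Fin l → Fin n,
    StrictMono r ∧ StrictMono c ∧ ∀ i j, M (r i) (c j) = F i j

/-- `M` makes `i` contributions (with respect to `k`): there exist pairs
`(R j, C j)` with `|R j| = k`, `|C j| = 2^k`, each submatrix `M[R j, C j]` is simple
(its columns, restricted to the rows `R j`, are pairwise distinct), and any two pairs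
with the same row set have all columns of one strictly before all columns of the other. -/
def Makes (k : ℕ) {m n : ℕ} (M : Matrix (Fin m) (Fin n) Bool) (i : ℕ) : Prop :=
  ∃ R : Fin i → Finset (Fin m), ∃ C : Fin i → Finset (Fin n),
    (∀ j, (R j).card = k) ∧ (∀ j, (C j).card = 2 ^ k) ∧
    (∀ j, ∀ c ∈ C j, ∀ c' ∈ C j, (∀ r ∈ R j, M r c = M r c') → c = c') ∧
    (∀ j j', j ≠ j' → R j = R j' →
      (∀ x ∈ C j, ∀ y ∈ C j', x < y) ∨ (∀ x ∈ C j', ∀ y ∈ C j, x < y))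

/-- `M` makes at least `x` contributions, for a real number `x`. -/
def MakesR (k : ℕ) {m n : ℕ} (M : Matrix (Fin m) (Fin n) Bool) (x : ℝ) : Prop :=
  ∃ i : ℕ, x ≤ (i : ℝ) ∧ Makes k M i

open Finset FinsetFamily

namespace ContribAux

variable {α : Type*} [DecidableEq α]

/-- total size measure of a set family -/
def mea (𝒜 : Finset (Finset α)) : ℕ := ∑ s ∈ 𝒜, s.card

lemma trace_compression_le (a : α) (𝒜 : Finset (Finset α)) (S : Finset α) :
    ((𝓓 a 𝒜).image (· ∩ S)).card ≤ (𝒜.image (· ∩ S)).card := by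
  classical
  set T₀ := 𝒜.image (· ∩ S) with hT₀
  have key1 : ∀ t ∈ (𝓓 a 𝒜).image (· ∩ S), t ∉ T₀ → a ∈ S ∧ a ∉ t ∧ insert a t ∈ T₀ := by
    intro t ht htn
    obtain ⟨u, hu, rfl⟩ := mem_image.1 ht
    rw [Down.mem_compression] at hu
    rcases hu with ⟨hu, -⟩ | ⟨hu1, hu2⟩
    · exact absurd (mem_image_of_mem _ hu) htn
    have haS : a ∈ S := by
      by_contra haS
      refine htn ?_
      have : (insert a u) ∩ S = u ∩ S := by
        rw [insert_inter_of_notMem haS]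
      exact this ▸ mem_image_of_mem _ hu2
    have hau : a ∉ u := fun hau => hu1 (by rwa [insert_eq_self.2 hau] at hu2)
    refine ⟨haS, fun hat => hau (mem_inter.1 hat).1, ?_⟩
    have : (insert a u) ∩ S = insert a (u ∩ S) := by
      rw [insert_inter_of_mem haS]
    exact this ▸ mem_image_of_mem _ hu2
  have key2 : ∀ t ∈ (𝓓 a 𝒜).image (· ∩ S), a ∈ t → t.erase a ∈ T₀ := by
    intro t ht hat
    obtain ⟨u, hu, rfl⟩ := mem_image.1 ht
    have hau : a ∈ u := (mem_inter.1 hat).1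
    rw [Down.mem_compression] at hu
    rcases hu with ⟨-, hu2⟩ | ⟨hu1, hu2⟩
    · have : (u.erase a) ∩ S = (u ∩ S).erase a := by
        ext x; simp only [mem_inter, mem_erase]; tauto
      exact this ▸ mem_image_of_mem _ hu2
    · exact absurd (by rwa [insert_eq_self.2 hau] at hu2) hu1
  apply card_le_card_of_injOn (fun t => if t ∈ T₀ then t else insert a t)
  · intro t ht
    by_cases h : t ∈ T₀
    · simpa [h] using h
    · simpa [h] using (key1 t ht h).2.2
  · intro t₁ h₁ t₂ h₂ he
    simp only [mem_coe] at h₁ h₂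
    by_cases k₁ : t₁ ∈ T₀ <;> by_cases k₂ : t₂ ∈ T₀ <;> simp only [k₁, k₂, if_pos, if_neg,
      if_true, if_false] at he
    · exact he
    · obtain ⟨-, hat₂, -⟩ := key1 t₂ h₂ k₂
      have hat₁ : a ∈ t₁ := he ▸ mem_insert_self a t₂
      have := key2 t₁ h₁ hat₁
      rw [he, erase_insert hat₂] at this
      exact absurd this k₂
    · obtain ⟨-, hat₁, -⟩ := key1 t₁ h₁ k₁
      have hat₂ : a ∈ t₂ := he ▸ mem_insert_self a t₁
      have := key2 t₂ h₂ hat₂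
      rw [← he, erase_insert hat₁] at this
      exact absurd this k₁
    · obtain ⟨-, hat₁, -⟩ := key1 t₁ h₁ k₁
      obtain ⟨-, hat₂, -⟩ := key1 t₂ h₂ k₂
      have := congrArg (·.erase a) he
      simpa [erase_insert hat₁, erase_insert hat₂] using this

lemma mea_compression_lt {𝒜 : Finset (Finset α)} {a : α} {s₀ : Finset α}
    (hs₀ : s₀ ∈ 𝒜) (hs₀e : s₀.erase a ∉ 𝒜) :
    mea (𝓓 a 𝒜) < mea 𝒜 := by
  classical
  set kept := {s ∈ 𝒜 | erase s a ∈ 𝒜} with hkept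
  set newf := {s ∈ 𝒜.image fun s ↦ erase s a | s ∉ 𝒜} with hnew
  set moved := {s ∈ 𝒜 | erase s a ∉ 𝒜} with hmoved
  have hmovedmem : ∀ s ∈ moved, a ∈ s := by
    intro s hs
    rw [hmoved, mem_filter] at hs
    by_contra ha
    rw [erase_eq_self.2 ha] at hs
    exact hs.2 hs.1
  have hnewmoved : newf = moved.image fun s => erase s a := by
    ext t
    simp only [hnew, hmoved, mem_filter, mem_image]
    constructor
    · rintro ⟨⟨s, hs, rfl⟩, ht⟩
      exact ⟨s, ⟨⟨hs, ht⟩, rfl⟩⟩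
    · rintro ⟨s, ⟨hs, hse⟩, rfl⟩
      exact ⟨⟨s, hs, rfl⟩, hse⟩
  have hcomp : mea (𝓓 a 𝒜) = ∑ s ∈ kept, s.card + ∑ s ∈ newf, s.card := by
    rw [mea, Down.compression, sum_disjUnion]
  have hinj : Set.InjOn (fun s => erase s a) moved := by
    intro s hs t ht he
    have := hmovedmem s hs
    have := hmovedmem t ht
    have h1 : insert a (erase s a) = insert a (erase t a) := by
      simp only at he; rw [he]
    rwa [insert_erase ‹a ∈ s›, insert_erase ‹a ∈ t›] at h1
  have hsumnew : ∑ s ∈ newf, s.card + moved.card = ∑ s ∈ moved, s.card := by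
    rw [hnewmoved, sum_image hinj, card_eq_sum_ones moved, ← Finset.sum_add_distrib]
    refine sum_congr rfl fun s hs => ?_
    simpa using card_erase_add_one (hmovedmem s hs)
  have hsplit : ∑ s ∈ kept, s.card + ∑ s ∈ moved, s.card = mea 𝒜 := by
    rw [mea, ← sum_filter_add_sum_filter_not 𝒜 (fun s => erase s a ∈ 𝒜)]
  have hmovedpos : 0 < moved.card := by
    refine card_pos.2 ⟨s₀, ?_⟩
    rw [hmoved, mem_filter]; exact ⟨hs₀, hs₀e⟩
  omega

lemma isLowerSet_of_erase {𝒜 : Finset (Finset α)} (h : ∀ s ∈ 𝒜, ∀ a, s.erase a ∈ 𝒜) :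
    IsLowerSet (𝒜 : Set (Finset α)) := by
  intro s t hts hs
  simp only [mem_coe] at hs ⊢
  have : ∀ (d : ℕ) (s : Finset α), s ∈ 𝒜 → ∀ t ⊆ s, (s \ t).card = d → t ∈ 𝒜 := by
    intro d
    induction d with
    | zero =>
      intro s hs t hts hd
      have he : s \ t = ∅ := card_eq_zero.1 hd
      have hst : s ⊆ t := by
        intro x hx
        by_contra hxt
        exact (notMem_empty x) (he ▸ mem_sdiff.2 ⟨hx, hxt⟩)
      have hts' : t = s := Subset.antisymm hts hst
      rw [hts']; exact hs
    | succ d ih =>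
      intro s hs t hts hd
      obtain ⟨x, hx⟩ : (s \ t).Nonempty := by
        rw [← card_pos, hd]; omega
      rw [mem_sdiff] at hx
      have h1 : s.erase x ∈ 𝒜 := h s hs x
      have h2 : t ⊆ s.erase x := subset_erase.2 ⟨hts, hx.2⟩
      refine ih (s.erase x) h1 t h2 ?_
      have : s.erase x \ t = (s \ t).erase x := by
        ext y; simp only [mem_sdiff, mem_erase]; tauto
      rw [this, card_erase_of_mem (mem_sdiff.2 hx), hd]
      omega
  exact this ((s \ t).card) s hs t hts rfl

lemma exists_lower (𝒜 : Finset (Finset α)) :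
    ∃ ℬ : Finset (Finset α), ℬ.card = 𝒜.card ∧ IsLowerSet (ℬ : Set (Finset α)) ∧
      ℬ.shatterer ⊆ 𝒜.shatterer ∧
      ∀ S : Finset α, (ℬ.image (· ∩ S)).card ≤ (𝒜.image (· ∩ S)).card := by
  classical
  have main : ∀ (Mb : ℕ) (𝒜 : Finset (Finset α)), mea 𝒜 ≤ Mb →
      ∃ ℬ : Finset (Finset α), ℬ.card = 𝒜.card ∧ IsLowerSet (ℬ : Set (Finset α)) ∧
      ℬ.shatterer ⊆ 𝒜.shatterer ∧
      ∀ S : Finset α, (ℬ.image (· ∩ S)).card ≤ (𝒜.image (· ∩ S)).card := by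
    intro Mb
    induction Mb with
    | zero =>
      intro 𝒜 hμ
      refine ⟨𝒜, rfl, ?_, Subset.rfl, fun S => le_rfl⟩
      refine isLowerSet_of_erase fun s hs a => ?_
      have hs0 : s.card = 0 := by
        have h1 : s.card ≤ mea 𝒜 := by
          simpa [mea] using Finset.single_le_sum (f := fun s : Finset α => s.card)
            (fun _ _ => Nat.zero_le _) hs
        omega
      rw [card_eq_zero.1 hs0] at hs ⊢
      simpa using hs
    | succ Mb ih =>
      intro 𝒜 hμ
      by_cases hl : ∀ s ∈ 𝒜, ∀ a, s.erase a ∈ 𝒜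
      · exact ⟨𝒜, rfl, isLowerSet_of_erase hl, Subset.rfl, fun S => le_rfl⟩
      · push_neg at hl
        obtain ⟨s₀, hs₀, a, hs₀a⟩ := hl
        have hlt := mea_compression_lt hs₀ hs₀a
        obtain ⟨ℬ, h1, h2, h3, h4⟩ := ih (𝓓 a 𝒜) (by omega)
        refine ⟨ℬ, ?_, h2, ?_, ?_⟩
        · rw [h1, Down.card_compression]
        · exact h3.trans (shatterer_compress_subset_shatterer a 𝒜)
        · exact fun S => (h4 S).trans (trace_compression_le a 𝒜 S)
  exact main (mea 𝒜) 𝒜 le_rfl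

variable {m n : ℕ}

/-- the support of column `j` -/
def colSet (M : Matrix (Fin m) (Fin n) Bool) (j : Fin n) : Finset (Fin m) :=
  Finset.univ.filter (fun r => M r j = true)

lemma mem_colSet {M : Matrix (Fin m) (Fin n) Bool} {j : Fin n} {r : Fin m} :
    r ∈ colSet M j ↔ M r j = true := by simp [colSet]

lemma makes_mono {k i i' : ℕ} {M : Matrix (Fin m) (Fin n) Bool}
    (h : Makes k M i) (hle : i' ≤ i) : Makes k M i' := by
  obtain ⟨R, C, h1, h2, h3, h4⟩ := h
  exact ⟨R ∘ Fin.castLE hle, C ∘ Fin.castLE hle, fun j => h1 _, fun j => h2 _,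
    fun j => h3 _, fun j j' hne => h4 _ _ (fun he => hne (Fin.castLE_injective hle he))⟩

/-- Strategy 1: many distinct shattered `k`-sets give many contributions. -/
lemma makes_of_shattered (M : Matrix (Fin m) (Fin n) Bool) (k N : ℕ)
    (K : Fin N → Finset (Fin m)) (hinj : Function.Injective K)
    (hcard : ∀ j, (K j).card = k)
    (hshat : ∀ j, ∀ B ⊆ K j, ∃ col : Fin n, (K j) ∩ colSet M col = B) :
    Makes k M N := by
  classical
  have hsh : ∀ (j : Fin N) (B : Finset (Fin m)),
      ∃ col : Fin n, B ⊆ K j → (K j) ∩ colSet M col = B := by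
    intro j B
    by_cases hB : B ⊆ K j
    · obtain ⟨col, hcol⟩ := hshat j B hB
      exact ⟨col, fun _ => hcol⟩
    · obtain ⟨col, hcol⟩ := hshat j ∅ (empty_subset _)
      exact ⟨col, fun h => absurd h hB⟩
  choose F hF using hsh
  refine ⟨K, fun j => (K j).powerset.image (F j), hcard, ?_, ?_, ?_⟩
  · intro j
    rw [card_image_of_injOn, card_powerset, hcard]
    intro B hB B' hB' he
    rw [mem_coe, mem_powerset] at hB hB'
    rw [← hF j B hB, ← hF j B' hB', he]
  · intro j c hc c' hc' hrows
    obtain ⟨B, hB, rfl⟩ := mem_image.1 hc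
    obtain ⟨B', hB', rfl⟩ := mem_image.1 hc'
    rw [mem_powerset] at hB hB'
    have hBB : B = B' := by
      have e1 := hF j B hB
      have e2 := hF j B' hB'
      rw [← e1, ← e2]
      ext r
      simp only [mem_inter, mem_colSet]
      constructor
      · rintro ⟨hr, hv⟩; exact ⟨hr, (hrows r hr) ▸ hv⟩
      · rintro ⟨hr, hv⟩; exact ⟨hr, (hrows r hr) ▸ hv⟩
    rw [hBB]
  · intro j j' hne he
    exact absurd (hinj he) hne

/-- Strategy 2 : harvesting a row set with many distinct column patterns. -/
lemma makes_of_trace (M : Matrix (Fin m) (Fin n) Bool) (k : ℕ) (c γ : ℝ)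
    (hyp : ∀ m' : ℕ, k ≤ m' →
      ∀ M' : Matrix (Fin m') (Fin (⌊c * (m' : ℝ) ^ (k - 1)⌋₊)) Bool,
        SimpleMatrix M' → MakesR k M' ((m' : ℝ) ^ ((1 : ℝ) - γ)))
    (S : Finset (Fin m)) (st : ℕ) (hS : S.card = st) (hks : k ≤ st) (G : ℕ)
    (htrace : ⌊c * (st : ℝ) ^ (k - 1)⌋₊ * G ≤
      ((Finset.univ.image (fun j : Fin n => colSet M j ∩ S))).card) :
    Makes k M (G * ⌈(st : ℝ) ^ ((1 : ℝ) - γ)⌉₊) := by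
  classical
  set w : ℕ := ⌊c * (st : ℝ) ^ (k - 1)⌋₊ with hw
  set pat : Fin n → Finset (Fin m) := fun j => colSet M j ∩ S with hpat
  set reps : Finset (Fin n) := Finset.univ.filter (fun j => ∀ j', pat j' = pat j → j ≤ j')
    with hreps
  have hrepsmin : ∀ j ∈ reps, ∀ j', pat j' = pat j → j ≤ j' := by
    intro j hj
    rw [hreps, mem_filter] at hj
    exact hj.2
  have hrepsinj : Set.InjOn pat reps := by
    intro j₁ h₁ j₂ h₂ he
    exact le_antisymm (hrepsmin _ h₁ j₂ he.symm) (hrepsmin _ h₂ j₁ he)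
  have hrepssurj : reps.image pat = Finset.univ.image pat := by
    apply Subset.antisymm (image_subset_image (subset_univ _))
    intro P hP
    obtain ⟨j₀, -, rfl⟩ := mem_image.1 hP
    have hne : (Finset.univ.filter (fun j => pat j = pat j₀)).Nonempty := ⟨j₀, by simp⟩
    set jm := (Finset.univ.filter (fun j => pat j = pat j₀)).min' hne with hjm
    have hjmmem : jm ∈ Finset.univ.filter (fun j => pat j = pat j₀) := min'_mem _ _
    rw [mem_filter] at hjmmem
    refine mem_image.2 ⟨jm, ?_, hjmmem.2⟩
    rw [hreps, mem_filter]
    refine ⟨mem_univ _, fun j' hj' => ?_⟩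
    refine min'_le _ _ ?_
    rw [mem_filter]
    exact ⟨mem_univ _, by rw [hj', hjmmem.2]⟩
  have hrepscard : w * G ≤ reps.card := by
    have hcardeq : reps.card = (Finset.univ.image pat).card := by
      rw [← hrepssurj, card_image_of_injOn hrepsinj]
    rw [hcardeq]
    exact htrace
  set q := reps.card with hq
  set emb : Fin q ↪o Fin n := reps.orderEmbOfFin hq.symm with hemb
  have hembmem : ∀ i, emb i ∈ reps := fun i => orderEmbOfFin_mem _ _ _
  set rowemb : Fin st ↪o Fin m := S.orderEmbOfFin hS with hrowemb
  have hrowmem : ∀ i, rowemb i ∈ S := fun i => orderEmbOfFin_mem _ _ _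
  have hrowsurj : ∀ r ∈ S, ∃ i, rowemb i = r := by
    intro r hr
    have h0 := Finset.range_orderEmbOfFin S hS
    have hr' : r ∈ Set.range ⇑(S.orderEmbOfFin hS) := by rw [h0]; exact hr
    obtain ⟨i, hi⟩ := hr'
    exact ⟨i, by rw [hrowemb]; exact hi⟩
  have hidx : ∀ (g : Fin G) (j : Fin w), g.val * w + j.val < q := by
    intro g j
    have h1 : g.val * w + j.val < (g.val + 1) * w := by
      have := j.isLt
      calc g.val * w + j.val < g.val * w + w := by omega
      _ = (g.val + 1) * w := by ring
    have h2 : (g.val + 1) * w ≤ G * w := Nat.mul_le_mul_right _ (by have := g.isLt; omega)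
    have h3 : G * w ≤ q := by rw [Nat.mul_comm]; exact hrepscard
    omega
  set colmap : Fin G → Fin w → Fin n := fun g j => emb ⟨g.val * w + j.val, hidx g j⟩
    with hcolmap
  have hcolmono : ∀ g : Fin G, StrictMono (colmap g) := by
    intro g j j' hjj
    apply emb.strictMono
    have : j.val < j'.val := hjj
    exact Fin.mk_lt_mk.2 (by omega)
  have hcolcross : ∀ (g g' : Fin G) (j j' : Fin w), g < g' → colmap g j < colmap g' j' := by
    intro g g' j j' hgg
    apply emb.strictMono
    refine Fin.mk_lt_mk.2 ?_
    have h1 : g.val * w + j.val < (g.val + 1) * w := by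
      have := j.isLt
      calc g.val * w + j.val < g.val * w + w := by omega
      _ = (g.val + 1) * w := by ring
    have h2 : (g.val + 1) * w ≤ g'.val * w := Nat.mul_le_mul_right _ (by exact hgg)
    omega
  set M' : Fin G → Matrix (Fin st) (Fin w) Bool :=
    fun g i j => M (rowemb i) (colmap g j) with hM'
  have hsimple : ∀ g, SimpleMatrix (M' g) := by
    intro g c₁ c₂ hcc
    have hpateq : pat (colmap g c₁) = pat (colmap g c₂) := by
      have hrow : ∀ r ∈ S, M r (colmap g c₁) = M r (colmap g c₂) := by
        intro r hr
        obtain ⟨i, rfl⟩ := hrowsurj r hr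
        exact hcc i
      ext r
      simp only [hpat, mem_inter, mem_colSet]
      constructor
      · rintro ⟨h1', h2'⟩; exact ⟨(hrow r h2') ▸ h1', h2'⟩
      · rintro ⟨h1', h2'⟩; exact ⟨(hrow r h2') ▸ h1', h2'⟩
    have h1' := hrepsmin _ (hembmem ⟨g.val * w + c₁.val, hidx g c₁⟩)
      (colmap g c₂) hpateq.symm
    have h2' := hrepsmin _ (hembmem ⟨g.val * w + c₂.val, hidx g c₂⟩)
      (colmap g c₁) hpateq
    have heq : colmap g c₁ = colmap g c₂ := le_antisymm h1' h2'
    have := emb.injective heq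
    have hval : g.val * w + c₁.val = g.val * w + c₂.val := congrArg Fin.val this
    exact Fin.ext (by omega)
  have hall : ∀ g : Fin G, ∃ i : ℕ, (st : ℝ) ^ ((1 : ℝ) - γ) ≤ (i : ℝ) ∧ Makes k (M' g) i :=
    fun g => hyp st hks (M' g) (hsimple g)
  choose ig hig hMk using hall
  set I := ⌈(st : ℝ) ^ ((1 : ℝ) - γ)⌉₊ with hI
  have hMkI : ∀ g, Makes k (M' g) I :=
    fun g => makes_mono (hMk g) (Nat.ceil_le.2 (hig g))
  choose R' C' h1 h2 h3 h4 using hMkI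
  set pj : Fin (G * I) → Fin G × Fin I := fun j => finProdFinEquiv.symm j with hpj
  have hpjinj : Function.Injective pj := fun a b h => by
    rw [hpj] at h
    exact finProdFinEquiv.symm.injective h
  refine ⟨fun j => (R' (pj j).1 (pj j).2).image (fun i => rowemb i),
      fun j => (C' (pj j).1 (pj j).2).image (colmap (pj j).1), ?_, ?_, ?_, ?_⟩
  · intro j
    rw [card_image_of_injective _ rowemb.injective]
    exact h1 _ _
  · intro j
    rw [card_image_of_injective _ (hcolmono (pj j).1).injective]
    exact h2 _ _
  · intro j cc hcc cc' hcc' hrows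
    obtain ⟨b, hb, rfl⟩ := mem_image.1 hcc
    obtain ⟨b', hb', rfl⟩ := mem_image.1 hcc'
    have : b = b' := by
      refine h3 (pj j).1 (pj j).2 b hb b' hb' ?_
      intro r hr
      exact hrows (rowemb r) (mem_image_of_mem _ hr)
    rw [this]
  · intro j j' hne hReq
    have hpne : pj j ≠ pj j' := fun h => hne (hpjinj h)
    rcases eq_or_ne (pj j).1 (pj j').1 with hg | hg
    · have htne : (pj j).2 ≠ (pj j').2 := by
        intro h
        exact hpne (Prod.ext hg h)
      have hRR : (R' (pj j).1 (pj j).2).image (fun i => rowemb i)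
          = (R' (pj j').1 (pj j').2).image (fun i => rowemb i) := hReq
      have hRR2 : R' (pj j).1 (pj j).2 = R' (pj j').1 (pj j').2 :=
        Finset.image_injective rowemb.injective hRR
      rw [← hg] at hRR2
      rcases h4 (pj j).1 (pj j).2 (pj j').2 htne hRR2 with h | h
      · left
        intro x hx y hy
        obtain ⟨x₀, hx₀, rfl⟩ := mem_image.1 hx
        obtain ⟨y₀, hy₀, rfl⟩ := mem_image.1 hy
        rw [← hg] at hy₀ ⊢
        exact hcolmono _ (h x₀ hx₀ y₀ hy₀)
      · right
        intro x hx y hy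
        obtain ⟨x₀, hx₀, rfl⟩ := mem_image.1 hx
        obtain ⟨y₀, hy₀, rfl⟩ := mem_image.1 hy
        rw [← hg] at hx₀ ⊢
        exact hcolmono _ (h x₀ hx₀ y₀ hy₀)
    · rcases lt_or_gt_of_ne hg with hlt | hlt
      · left
        intro x hx y hy
        obtain ⟨x₀, hx₀, rfl⟩ := mem_image.1 hx
        obtain ⟨y₀, hy₀, rfl⟩ := mem_image.1 hy
        exact hcolcross _ _ _ _ hlt
      · right
        intro x hx y hy
        obtain ⟨x₀, hx₀, rfl⟩ := mem_image.1 hx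
        obtain ⟨y₀, hy₀, rfl⟩ := mem_image.1 hy
        exact hcolcross _ _ _ _ hlt

end ContribAux

open ContribAux in
set_option maxHeartbeats 1000000 in
theorem contributions_step_two (k : ℕ) (hk : 2 ≤ k) (c γ : ℝ)
    (hc : 0 < c) (hγ0 : 0 < γ) (hγ1 : γ ≤ 1)
    (hyp : ∀ m : ℕ, k ≤ m →
      ∀ M : Matrix (Fin m) (Fin (⌊c * (m : ℝ) ^ (k - 1)⌋₊)) Bool,
        SimpleMatrix M → MakesR k M ((m : ℝ) ^ ((1 : ℝ) - γ))) :
    ∃ c' : ℝ, 0 < c' ∧ ∀ m : ℕ, k ≤ m →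
      ∀ M : Matrix (Fin m) (Fin (⌊c' * (m : ℝ) ^ (k - 1)⌋₊)) Bool,
        SimpleMatrix M → MakesR k M ((m : ℝ) ^ ((1 : ℝ) - γ / ((k : ℝ) - 1 + γ))) := by
  classical
  set γ' : ℝ := γ / ((k : ℝ) - 1 + γ) with hγ'def
  have hkR : (2 : ℝ) ≤ (k : ℝ) := by exact_mod_cast hk
  have hden : 0 < (k : ℝ) - 1 + γ := by linarith
  have hγ'pos : 0 < γ' := div_pos hγ0 hden
  have hγ'lt1 : γ' < 1 := by
    rw [hγ'def, div_lt_one hden]; linarith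
  set m₀ : ℕ := ⌈(2 * (k : ℝ)) ^ ((1 : ℝ) / γ')⌉₊ with hm₀def
  set D : ℝ := c * (k : ℝ) ^ k * 2 ^ k + c with hDdef
  have hDpos : 0 < D := by positivity
  set c' : ℝ := 2 ^ (m₀ + 1) + 2 ^ k + D + 1 with hc'def
  have hc'pos : 0 < c' := by positivity
  refine ⟨c', hc'pos, ?_⟩
  intro m hkm
  set n : ℕ := ⌊c' * (m : ℝ) ^ (k - 1)⌋₊ with hndef
  intro M hM
  have hm2 : 2 ≤ m := le_trans hk hkm
  have hmR : (2 : ℝ) ≤ (m : ℝ) := by exact_mod_cast hm2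
  have hmpos : (0 : ℝ) < (m : ℝ) := by linarith
  have hm1 : (1 : ℝ) ≤ (m : ℝ) := by linarith
  have hn2m : n ≤ 2 ^ m := by
    have hinj : Function.Injective (fun j : Fin n => (fun r => M r j : Fin m → Bool)) := by
      intro a b h
      apply hM a b
      intro r
      have h2 := congrFun h r
      simpa using h2
    have := Fintype.card_le_of_injective _ hinj
    simpa [Fintype.card_fun] using this
  by_cases hbig : (2 * (k : ℝ)) ^ ((1 : ℝ) / γ') ≤ (m : ℝ)
  swap
  · exfalso
    push_neg at hbig
    have hmm₀ : m < m₀ := by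
      have h1 : (m : ℝ) < (m₀ : ℝ) := lt_of_lt_of_le hbig (Nat.le_ceil _)
      exact_mod_cast h1
    have hpow : ((2 : ℝ) ^ (m + 1) : ℝ) ≤ c' := by
      have h1 : ((2 : ℝ) ^ (m + 1) : ℝ) ≤ 2 ^ (m₀ + 1) := by
        apply pow_le_pow_right₀ (by norm_num)
        omega
      have h2 : (0 : ℝ) ≤ 2 ^ k := by positivity
      rw [hc'def]; linarith
    have hfloor : 2 ^ (m + 1) ≤ n := by
      rw [hndef]
      apply Nat.le_floor
      have h1 : (1 : ℝ) ≤ (m : ℝ) ^ (k - 1) := one_le_pow₀ hm1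
      have h2 : ((2 ^ (m + 1) : ℕ) : ℝ) = (2 : ℝ) ^ (m + 1) := by push_cast; ring
      rw [h2]
      calc (2 : ℝ) ^ (m + 1) = (2 : ℝ) ^ (m + 1) * 1 := by ring
      _ ≤ c' * (m : ℝ) ^ (k - 1) := by
          apply mul_le_mul hpow h1 (by norm_num) (le_of_lt hc'pos)
    have hcon : (2 : ℕ) ^ m < 2 ^ (m + 1) := by
      apply Nat.pow_lt_pow_right (by norm_num)
      omega
    omega
  -- main case
  set N : ℕ := ⌈(m : ℝ) ^ ((1 : ℝ) - γ') ⌉₊ with hNdef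
  have hexp0 : (0 : ℝ) ≤ 1 - γ' := by linarith
  have hrpos : (0 : ℝ) < (m : ℝ) ^ ((1 : ℝ) - γ') := Real.rpow_pos_of_pos hmpos _
  have hr1 : (1 : ℝ) ≤ (m : ℝ) ^ ((1 : ℝ) - γ') := Real.one_le_rpow hm1 hexp0
  have hN1 : 1 ≤ N := Nat.one_le_ceil_iff.2 hrpos
  have hNle : (N : ℝ) ≤ 2 * (m : ℝ) ^ ((1 : ℝ) - γ') := by
    have h1 : (N : ℝ) < (m : ℝ) ^ ((1 : ℝ) - γ') + 1 :=
      Nat.ceil_lt_add_one (le_of_lt hrpos)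
    linarith
  have hNge : (m : ℝ) ^ ((1 : ℝ) - γ') ≤ (N : ℝ) := Nat.le_ceil _
  set st : ℕ := k * N with hstdef
  have hks : k ≤ st := Nat.le_mul_of_pos_right k (by omega)
  have hstpos : 0 < st := by positivity
  have hstR : (0 : ℝ) < (st : ℝ) := by exact_mod_cast hstpos
  have h2k : 2 * (k : ℝ) ≤ (m : ℝ) ^ γ' := by
    have h1 : ((2 * (k : ℝ)) ^ ((1 : ℝ) / γ')) ^ γ' ≤ (m : ℝ) ^ γ' :=
      Real.rpow_le_rpow (Real.rpow_nonneg (by linarith) _) hbig (le_of_lt hγ'pos)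
    rwa [← Real.rpow_mul (by linarith : (0:ℝ) ≤ 2 * (k:ℝ)), one_div,
      inv_mul_cancel₀ (ne_of_gt hγ'pos), Real.rpow_one] at h1
  have hstm : st ≤ m := by
    have h1 : (st : ℝ) ≤ 2 * (k : ℝ) * (m : ℝ) ^ ((1 : ℝ) - γ') := by
      rw [hstdef]
      push_cast
      calc (k : ℝ) * (N : ℝ) ≤ (k : ℝ) * (2 * (m : ℝ) ^ ((1 : ℝ) - γ')) := by
            apply mul_le_mul_of_nonneg_left hNle (by positivity)
      _ = 2 * (k : ℝ) * (m : ℝ) ^ ((1 : ℝ) - γ') := by ring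
    have h2 : 2 * (k : ℝ) * (m : ℝ) ^ ((1 : ℝ) - γ') ≤
        (m : ℝ) ^ γ' * (m : ℝ) ^ ((1 : ℝ) - γ') :=
      mul_le_mul_of_nonneg_right h2k (Real.rpow_nonneg (le_of_lt hmpos) _)
    have h3 : (m : ℝ) ^ γ' * (m : ℝ) ^ ((1 : ℝ) - γ') = (m : ℝ) := by
      rw [← Real.rpow_add hmpos]
      norm_num
    have h4 : (st : ℝ) ≤ (m : ℝ) := by linarith
    exact_mod_cast h4
  set w : ℕ := ⌊c * (st : ℝ) ^ (k - 1)⌋₊ with hwdef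
  set G : ℕ := ⌈(N : ℝ) * (st : ℝ) ^ (γ - 1)⌉₊ with hGdef
  set Q : ℕ := w * G with hQdef
  set 𝒜 : Finset (Finset (Fin m)) := Finset.univ.image (colSet M) with h𝒜def
  have hcolinj : Function.Injective (colSet M) := by
    intro a b h
    refine hM a b fun r => ?_
    have h5 : (r ∈ colSet M a) ↔ (r ∈ colSet M b) := by rw [h]
    simp only [colSet, mem_filter, mem_univ, true_and] at h5
    cases ha : M r a <;> cases hb : M r b <;> simp_all
  have h𝒜card : 𝒜.card = n := by
    rw [h𝒜def, card_image_of_injective _ hcolinj, card_univ, Fintype.card_fin]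
  set T : Finset (Finset (Fin m)) := 𝒜.shatterer.filter (fun A => A.card = k) with hTdef
  by_cases h1 : N ≤ T.card
  · -- STRATEGY 1
    obtain ⟨T', hT'sub, hT'card⟩ := exists_subset_card_eq h1
    set K : Fin N → Finset (Fin m) :=
      fun j => ((T'.equivFin.symm (Fin.cast hT'card.symm j)) : Finset (Fin m)) with hKdef
    have hKmem : ∀ j, K j ∈ T := fun j => hT'sub (T'.equivFin.symm _).2
    have hKinj : Function.Injective K := by
      intro a b h
      have h2 : T'.equivFin.symm (Fin.cast hT'card.symm a)
          = T'.equivFin.symm (Fin.cast hT'card.symm b) := Subtype.ext h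
      have h3 := T'.equivFin.symm.injective h2
      have h4 : (Fin.cast hT'card.symm a).val = (Fin.cast hT'card.symm b).val :=
        congrArg Fin.val h3
      exact Fin.ext h4
    refine ⟨N, hNge, ?_⟩
    refine makes_of_shattered M k N K hKinj (fun j => (mem_filter.1 (hKmem j)).2) ?_
    intro j B hB
    have hKs := mem_shatterer.1 (mem_filter.1 (hKmem j)).1
    obtain ⟨u, hu, huB⟩ := hKs hB
    obtain ⟨col, -, rfl⟩ := mem_image.1 hu
    exact ⟨col, huB⟩
  by_cases h2 : ∃ S : Finset (Fin m), S.card = st ∧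
      Q ≤ (Finset.univ.image (fun j : Fin n => colSet M j ∩ S)).card
  · -- STRATEGY 2
    obtain ⟨S, hScard, hQle⟩ := h2
    have hMak := makes_of_trace M k c γ hyp S st hScard hks G hQle
    refine ⟨G * ⌈(st : ℝ) ^ ((1 : ℝ) - γ)⌉₊, ?_, hMak⟩
    have hG : (N : ℝ) * (st : ℝ) ^ (γ - 1) ≤ (G : ℝ) := Nat.le_ceil _
    have hI : (st : ℝ) ^ ((1 : ℝ) - γ) ≤ ((⌈(st : ℝ) ^ ((1 : ℝ) - γ)⌉₊ : ℕ) : ℝ) :=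
      Nat.le_ceil _
    have hprod : (N : ℝ) ≤ (G : ℝ) * ((⌈(st : ℝ) ^ ((1 : ℝ) - γ)⌉₊ : ℕ) : ℝ) := by
      have e1 : (N : ℝ) * (st : ℝ) ^ (γ - 1) * ((st : ℝ) ^ ((1 : ℝ) - γ)) = N := by
        rw [mul_assoc, ← Real.rpow_add hstR]
        norm_num
      calc (N : ℝ) = (N : ℝ) * (st : ℝ) ^ (γ - 1) * ((st : ℝ) ^ ((1 : ℝ) - γ)) := e1.symm
      _ ≤ (G : ℝ) * ((⌈(st : ℝ) ^ ((1 : ℝ) - γ)⌉₊ : ℕ) : ℝ) := by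
          apply mul_le_mul hG hI (Real.rpow_nonneg (le_of_lt hstR) _) (by positivity)
    have hcast : ((G * ⌈(st : ℝ) ^ ((1 : ℝ) - γ)⌉₊ : ℕ) : ℝ)
        = (G : ℝ) * ((⌈(st : ℝ) ^ ((1 : ℝ) - γ)⌉₊ : ℕ) : ℝ) := by push_cast; ring
    rw [hcast]
    exact le_trans hNge (le_trans hprod (le_refl _))
  -- STRATEGY 3 : contradiction
  exfalso
  push_neg at h1 h2
  set X : Finset (Fin m) := T.biUnion id with hXdef
  have hXcard : X.card ≤ st := by
    have h3 : X.card ≤ ∑ A ∈ T, (id A).card := card_biUnion_le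
    have h4 : ∑ A ∈ T, (id A).card = T.card * k :=
      calc ∑ A ∈ T, (id A).card = ∑ _A ∈ T, k :=
            Finset.sum_congr rfl (fun A hA => by simpa using (mem_filter.1 hA).2)
      _ = T.card * k := by rw [Finset.sum_const, smul_eq_mul]
    have h5 : T.card * k ≤ (N - 1) * k := Nat.mul_le_mul_right k (by omega)
    have h6 : (N - 1) * k ≤ k * N := by
      rw [Nat.mul_comm]
      exact Nat.mul_le_mul_left k (by omega)
    omega
  have hstuniv : st ≤ (Finset.univ : Finset (Fin m)).card := by
    rw [card_univ, Fintype.card_fin]; exact hstm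
  obtain ⟨Xt, hXsub, -, hXtcard⟩ :=
    exists_subsuperset_card_eq (subset_univ X) hXcard hstuniv
  obtain ⟨ℬ, hB1, hB2, hB3, hB4⟩ := exists_lower 𝒜
  have hbigmem : ∀ A ∈ ℬ, k ≤ A.card → A ⊆ Xt := by
    intro A hA hAk x hx
    have h5 : k - 1 ≤ (A.erase x).card := by
      rw [card_erase_of_mem hx]; omega
    obtain ⟨K', hK'sub, hK'card⟩ := exists_subset_card_eq h5
    have hxK' : x ∉ K' := fun hxx => (notMem_erase x A) (hK'sub hxx)
    have hKcard : (insert x K').card = k := by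
      rw [card_insert_of_notMem hxK', hK'card]; omega
    have hKA : insert x K' ⊆ A := insert_subset hx (hK'sub.trans (erase_subset x A))
    have hKB : insert x K' ∈ ℬ := by
      have := hB2 (le_iff_subset.2 hKA) (mem_coe.2 hA)
      exact mem_coe.1 this
    have hKsh : insert x K' ∈ ℬ.shatterer := subset_shatterer hB2 hKB
    have hKT : insert x K' ∈ T := mem_filter.2 ⟨hB3 hKsh, hKcard⟩
    exact hXsub (mem_biUnion.2 ⟨insert x K', hKT, by simp⟩)
  have hsmall : (ℬ.filter (fun A => A.card < k)).card ≤ (m + 1) ^ (k - 1) := by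
    have hcount : ((Finset.univ : Finset (Fin (k-1) → Option (Fin m)))).card
        = (m + 1) ^ (k - 1) := by
      rw [card_univ, Fintype.card_fun]
      simp
    rw [← hcount]
    apply card_le_card_of_injOn (fun A => fun i : Fin (k-1) => (A.sort (· ≤ ·))[i.val]?)
    · intro A hA; exact mem_univ _
    · intro A hA B hB h
      simp only [mem_coe, mem_filter] at hA hB
      have hAc : A.card ≤ k - 1 := by omega
      have hBc : B.card ≤ k - 1 := by omega
      have hlist : A.sort (· ≤ ·) = B.sort (· ≤ ·) := by
        apply List.ext_getElem?
        intro i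
        by_cases hi : i < k - 1
        · exact congrFun h ⟨i, hi⟩
        · rw [List.getElem?_eq_none, List.getElem?_eq_none]
          · rw [Finset.length_sort]; omega
          · rw [Finset.length_sort]; omega
      have h7 := congrArg List.toFinset hlist
      rwa [Finset.sort_toFinset, Finset.sort_toFinset] at h7
  have hbigcount : (ℬ.filter (fun A => ¬ A.card < k)).card < Q := by
    have hsub : (ℬ.filter (fun A => ¬ A.card < k)).card ≤ (ℬ.image (· ∩ Xt)).card := by
      apply card_le_card_of_injOn (fun A => A ∩ Xt)
      · intro A hA
        exact mem_image_of_mem _ (mem_of_mem_filter A hA)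
      · intro A hA B hB h
        rw [mem_coe, mem_filter] at hA hB
        have hA2 : A ∩ Xt = A := inter_eq_left.2 (hbigmem A hA.1 (by omega))
        have hB2' : B ∩ Xt = B := inter_eq_left.2 (hbigmem B hB.1 (by omega))
        simp only at h
        rwa [hA2, hB2'] at h
    have h6 := hB4 Xt
    have h7 : (𝒜.image (· ∩ Xt)).card < Q := by
      have h8 : 𝒜.image (· ∩ Xt) = Finset.univ.image (fun j : Fin n => colSet M j ∩ Xt) := by
        rw [h𝒜def, image_image]
        rfl
      rw [h8]
      exact h2 Xt hXtcard
    omega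
  have hBcard : ℬ.card = n := by rw [hB1, h𝒜card]
  have htot : n < (m + 1) ^ (k - 1) + Q := by
    have h9 := card_filter_add_card_filter_not (s := ℬ) (p := fun A => A.card < k)
    omega
  -- real arithmetic contradiction
  have hP1 : (1 : ℝ) ≤ (m : ℝ) ^ (k - 1) := one_le_pow₀ hm1
  have hlow : c' * (m : ℝ) ^ (k - 1) - 1 < (n : ℝ) := by
    rw [hndef]
    exact Nat.sub_one_lt_floor _
  have hup : (n : ℝ) < ((m + 1 : ℕ) : ℝ) ^ (k - 1) + (Q : ℝ) := by
    have := htot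
    exact_mod_cast this
  have hm1pow : ((m + 1 : ℕ) : ℝ) ^ (k - 1) ≤ 2 ^ k * (m : ℝ) ^ (k - 1) := by
    have h5 : ((m + 1 : ℕ) : ℝ) ≤ 2 * (m : ℝ) := by push_cast; linarith
    calc ((m + 1 : ℕ) : ℝ) ^ (k - 1) ≤ (2 * (m : ℝ)) ^ (k - 1) := by
          apply pow_le_pow_left₀ (by positivity) h5
    _ = 2 ^ (k - 1) * (m : ℝ) ^ (k - 1) := by rw [mul_pow]
    _ ≤ 2 ^ k * (m : ℝ) ^ (k - 1) := by
        apply mul_le_mul_of_nonneg_right _ (by positivity)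
        apply pow_le_pow_right₀ (by norm_num)
        omega
  -- Q ≤ D * m ^ (k-1)
  have hNpos : (0 : ℝ) < (N : ℝ) := by exact_mod_cast (by omega : 0 < N)
  have hkpos : (0 : ℝ) < (k : ℝ) := by linarith
  have hwle : (w : ℝ) ≤ c * (st : ℝ) ^ (k - 1) := Nat.floor_le (by positivity)
  have hGle : (G : ℝ) ≤ (N : ℝ) * (st : ℝ) ^ (γ - 1) + 1 :=
    le_of_lt (Nat.ceil_lt_add_one (by positivity))
  have hQle2 : (Q : ℝ) ≤ (c * (st : ℝ) ^ (k - 1)) * ((N : ℝ) * (st : ℝ) ^ (γ - 1) + 1) := by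
    rw [hQdef]
    push_cast
    apply mul_le_mul hwle hGle (by positivity) (by positivity)
  have hcast1 : ((k - 1 : ℕ) : ℝ) = (k : ℝ) - 1 := by
    rw [Nat.cast_sub (by omega : 1 ≤ k)]
    norm_num
  have hA : (st : ℝ) ^ (k - 1) * (st : ℝ) ^ (γ - 1)
      = (st : ℝ) ^ ((k : ℝ) - 2 + γ) := by
    rw [← Real.rpow_natCast (st : ℝ) (k - 1), ← Real.rpow_add hstR, hcast1]
    ring_nf
  have hstcast : (st : ℝ) = (k : ℝ) * (N : ℝ) := by rw [hstdef]; push_cast; ring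
  have hexpkγ : (0 : ℝ) ≤ (k : ℝ) - 2 + γ := by linarith
  have hB : (st : ℝ) ^ ((k : ℝ) - 2 + γ)
      = (k : ℝ) ^ ((k : ℝ) - 2 + γ) * (N : ℝ) ^ ((k : ℝ) - 2 + γ) := by
    rw [hstcast, Real.mul_rpow (le_of_lt hkpos) (le_of_lt hNpos)]
  have hC : (N : ℝ) * (N : ℝ) ^ ((k : ℝ) - 2 + γ) = (N : ℝ) ^ ((k : ℝ) - 1 + γ) := by
    nth_rewrite 1 [← Real.rpow_one (N : ℝ)]
    rw [← Real.rpow_add hNpos]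
    congr 1; ring
  have hD2 : ((m : ℝ) ^ ((1 : ℝ) - γ')) ^ ((k : ℝ) - 1 + γ) = (m : ℝ) ^ (k - 1) := by
    rw [← Real.rpow_natCast (m : ℝ) (k - 1), ← Real.rpow_mul (le_of_lt hmpos), hcast1]
    congr 1
    rw [hγ'def]
    field_simp
    ring
  have hD1 : (N : ℝ) ^ ((k : ℝ) - 1 + γ)
      ≤ (2 : ℝ) ^ ((k : ℝ) - 1 + γ) * (m : ℝ) ^ (k - 1) := by
    have h5 : (N : ℝ) ^ ((k : ℝ) - 1 + γ)
        ≤ (2 * (m : ℝ) ^ ((1 : ℝ) - γ')) ^ ((k : ℝ) - 1 + γ) :=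
      Real.rpow_le_rpow (le_of_lt hNpos) hNle (by linarith)
    rwa [Real.mul_rpow (by norm_num) (le_of_lt hrpos), hD2] at h5
  have hE : (2 : ℝ) ^ ((k : ℝ) - 1 + γ) ≤ (2 : ℝ) ^ (k : ℕ) := by
    rw [← Real.rpow_natCast (2 : ℝ) k]
    apply Real.rpow_le_rpow_of_exponent_le (by norm_num)
    linarith
  have hF : (k : ℝ) ^ ((k : ℝ) - 2 + γ) ≤ (k : ℝ) ^ (k : ℕ) := by
    rw [← Real.rpow_natCast (k : ℝ) k]
    apply Real.rpow_le_rpow_of_exponent_le (by linarith)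
    linarith
  have hterm1 : c * ((N : ℝ) * ((st : ℝ) ^ (k - 1) * (st : ℝ) ^ (γ - 1)))
      ≤ c * (k : ℝ) ^ k * 2 ^ k * (m : ℝ) ^ (k - 1) := by
    rw [hA, hB]
    have e2 : (N : ℝ) * ((k : ℝ) ^ ((k : ℝ) - 2 + γ) * (N : ℝ) ^ ((k : ℝ) - 2 + γ))
        = (k : ℝ) ^ ((k : ℝ) - 2 + γ) * (N : ℝ) ^ ((k : ℝ) - 1 + γ) := by
      rw [← hC]; ring
    rw [e2]
    have e3 : (k : ℝ) ^ ((k : ℝ) - 2 + γ) * (N : ℝ) ^ ((k : ℝ) - 1 + γ)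
        ≤ (k : ℝ) ^ (k : ℕ) * ((2 : ℝ) ^ (k : ℕ) * (m : ℝ) ^ (k - 1)) := by
      apply mul_le_mul hF (hD1.trans ?_) (Real.rpow_nonneg (le_of_lt hNpos) _)
        (by positivity)
      apply mul_le_mul_of_nonneg_right hE (by positivity)
    calc c * ((k : ℝ) ^ ((k : ℝ) - 2 + γ) * (N : ℝ) ^ ((k : ℝ) - 1 + γ))
        ≤ c * ((k : ℝ) ^ (k : ℕ) * ((2 : ℝ) ^ (k : ℕ) * (m : ℝ) ^ (k - 1))) :=
          mul_le_mul_of_nonneg_left e3 (le_of_lt hc)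
    _ = c * (k : ℝ) ^ k * 2 ^ k * (m : ℝ) ^ (k - 1) := by ring
  have hterm2 : c * (st : ℝ) ^ (k - 1) ≤ c * (m : ℝ) ^ (k - 1) := by
    apply mul_le_mul_of_nonneg_left _ (le_of_lt hc)
    apply pow_le_pow_left₀ (le_of_lt hstR)
    exact_mod_cast hstm
  have hQreal : (Q : ℝ) ≤ D * (m : ℝ) ^ (k - 1) := by
    have e4 : (c * (st : ℝ) ^ (k - 1)) * ((N : ℝ) * (st : ℝ) ^ (γ - 1) + 1)
        = c * ((N : ℝ) * ((st : ℝ) ^ (k - 1) * (st : ℝ) ^ (γ - 1)))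
          + c * (st : ℝ) ^ (k - 1) := by ring
    rw [hDdef]
    calc (Q : ℝ) ≤ (c * (st : ℝ) ^ (k - 1)) * ((N : ℝ) * (st : ℝ) ^ (γ - 1) + 1) := hQle2
    _ = c * ((N : ℝ) * ((st : ℝ) ^ (k - 1) * (st : ℝ) ^ (γ - 1)))
          + c * (st : ℝ) ^ (k - 1) := e4
    _ ≤ c * (k : ℝ) ^ k * 2 ^ k * (m : ℝ) ^ (k - 1) + c * (m : ℝ) ^ (k - 1) := by
        exact add_le_add hterm1 hterm2
    _ = (c * (k : ℝ) ^ k * 2 ^ k + c) * (m : ℝ) ^ (k - 1) := by ring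
  have hmul : (2 ^ k + D + 1) * ((m : ℝ) ^ (k - 1)) ≤ c' * (m : ℝ) ^ (k - 1) := by
    apply mul_le_mul_of_nonneg_right _ (by positivity)
    rw [hc'def]
    have : (0 : ℝ) ≤ 2 ^ (m₀ + 1) := by positivity
    linarith
  have hexpand : (2 ^ k + D + 1) * ((m : ℝ) ^ (k - 1))
      = 2 ^ k * (m : ℝ) ^ (k - 1) + D * (m : ℝ) ^ (k - 1) + (m : ℝ) ^ (k - 1) := by ring
  linarith
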